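/- Let V be a real normed space and H a real inner-product space, and suppose there is a linear bijection T : V → H and λ ≥ 1 with ‖Tx‖ ≤ ‖x‖ ≤ λ‖Tx‖ for all x ∈ V. Then for all x, y ∈ V not both zero, 1/λ² ≤ (‖x + y‖² + ‖x − y‖²)/(2(‖x‖² + ‖y‖²)) ≤ λ². In particular, the von Neumann–Jordan constant of V satisfies C_NJ(V) ≤ d_BM(V, 𝔼ⁿ)². -/

import Mathlib

theorem stmt11 {V H : Type*} [NormedAddCommGroup V] [NormedSpace ℝ V]
    [NormedAddCommGroup H] [InnerProductSpace ℝ H]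
    (T : V ≃ₗ[ℝ] H) (lam : ℝ) (hlam : 1 ≤ lam)
    (hT : ∀ x : V, ‖T x‖ ≤ ‖x‖ ∧ ‖x‖ ≤ lam * ‖T x‖) :
    ∀ x y : V, ¬(x = 0 ∧ y = 0) →
      1 / lam ^ 2 ≤ (‖x + y‖ ^ 2 + ‖x - y‖ ^ 2) / (2 * (‖x‖ ^ 2 + ‖y‖ ^ 2)) ∧
      (‖x + y‖ ^ 2 + ‖x - y‖ ^ 2) / (2 * (‖x‖ ^ 2 + ‖y‖ ^ 2)) ≤ lam ^ 2 := by
  intro x y hxy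
  have hlam0 : (0:ℝ) < lam := lt_of_lt_of_le one_pos hlam
  have hden : 0 < 2 * (‖x‖ ^ 2 + ‖y‖ ^ 2) := by
    rcases not_and_or.mp hxy with h | h
    · have hx : 0 < ‖x‖ := norm_pos_iff.mpr h
      nlinarith [sq_nonneg ‖y‖]
    · have hy : 0 < ‖y‖ := norm_pos_iff.mpr h
      nlinarith [sq_nonneg ‖x‖]
  obtain ⟨h1, h2⟩ := hT x
  obtain ⟨h3, h4⟩ := hT y
  obtain ⟨h5, h6⟩ := hT (x + y)
  obtain ⟨h7, h8⟩ := hT (x - y)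
  have par : ‖T x + T y‖ * ‖T x + T y‖ + ‖T x - T y‖ * ‖T x - T y‖
      = 2 * (‖T x‖ * ‖T x‖ + ‖T y‖ * ‖T y‖) := by
        have h := parallelogram_law_with_norm ℝ (T x) (T y); simp only [sq] at h; exact h
  rw [← map_add, ← map_sub] at par
  -- squared inequalities
  have sq : ∀ a b : ℝ, 0 ≤ a → a ≤ b → a ^ 2 ≤ b ^ 2 :=
    fun a b ha h => pow_le_pow_left₀ ha h 2
  have s1 : ‖T x‖ ^ 2 ≤ ‖x‖ ^ 2 := sq _ _ (norm_nonneg _) h1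
  have s2 : ‖x‖ ^ 2 ≤ lam ^ 2 * ‖T x‖ ^ 2 := by
    have := sq _ _ (norm_nonneg x) h2; rwa [mul_pow] at this
  have s3 : ‖T y‖ ^ 2 ≤ ‖y‖ ^ 2 := sq _ _ (norm_nonneg _) h3
  have s4 : ‖y‖ ^ 2 ≤ lam ^ 2 * ‖T y‖ ^ 2 := by
    have := sq _ _ (norm_nonneg y) h4; rwa [mul_pow] at this
  have s5 : ‖T (x + y)‖ ^ 2 ≤ ‖x + y‖ ^ 2 := sq _ _ (norm_nonneg _) h5
  have s6 : ‖x + y‖ ^ 2 ≤ lam ^ 2 * ‖T (x + y)‖ ^ 2 := by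
    have := sq _ _ (norm_nonneg (x + y)) h6; rwa [mul_pow] at this
  have s7 : ‖T (x - y)‖ ^ 2 ≤ ‖x - y‖ ^ 2 := sq _ _ (norm_nonneg _) h7
  have s8 : ‖x - y‖ ^ 2 ≤ lam ^ 2 * ‖T (x - y)‖ ^ 2 := by
    have := sq _ _ (norm_nonneg (x - y)) h8; rwa [mul_pow] at this
  constructor
  · rw [div_le_div_iff₀ (by positivity) hden]
    nlinarith [par]
  · rw [div_le_iff₀ hden]
    nlinarith [par]
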